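/- arXiv:2210.05180 — 2 statements merged into one kernel-verified Lean document; each statement's English description precedes it below -/
import Mathlib

section
/- Let Q be a finite set of states, A a finite nonempty set of actions, G ⊆ Q a goal set, and H ∈ ℕ a horizon. Let P, P̂ : Q × A × Q → ℝ be substochastic transition functions (nonnegative with Σ_{q′} P(q,a,q′) ≤ 1 and Σ_{q′} P̂(q,a,q′) ≤ 1 for all q, a), and suppose δ ≥ 0 satisfies Σ_{q′ ∈ Q} |P(q,a,q′) − P̂(q,a,q′)| ≤ δ for all q ∈ Q and a ∈ A. Define value functions V_H(q) = 1_G(q) and, for k = H−1, …, 0, V_k(q) = 1_G(q) + 1_{Q∖G}(q) · max_{a ∈ A} Σ_{q′ ∈ Q} V_{k+1}(q′) P(q,a,q′); define V̂_k analogously with P̂ in place of P. Then for every k ∈ {0,…,H} and every q ∈ Q: |V_k(q) − V̂_k(q)| ≤ (H − k)·δ. -/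
/-- Finite-horizon dynamic-programming value function for maximal probability of
reaching the goal set `G` within a given number of remaining steps: `mdpVal P G j q`
is `V_k q` where `j = H - k` is the number of remaining steps. -/
noncomputable def mdpVal {Q A : Type*} [Fintype Q] [Fintype A] [Nonempty A]
    (P : Q → A → Q → ℝ) (G : Set Q) : ℕ → Q → ℝ
  | 0 => fun q => Set.indicator G (fun _ => (1 : ℝ)) q
  | j + 1 => fun q =>
      Set.indicator G (fun _ => (1 : ℝ)) q +
        Set.indicator Gᶜ (fun _ => (1 : ℝ)) q *
          Finset.univ.sup' Finset.univ_nonempty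
            (fun a => ∑ q', mdpVal P G j q' * P q a q')

lemma mdpVal_mem {Q A : Type*} [Fintype Q] [Fintype A] [Nonempty A]
    (P : Q → A → Q → ℝ) (G : Set Q)
    (hP0 : ∀ q a q', 0 ≤ P q a q') (hP1 : ∀ q a, ∑ q', P q a q' ≤ 1) :
    ∀ j q, 0 ≤ mdpVal P G j q ∧ mdpVal P G j q ≤ 1 := by
  intro j
  induction j with
  | zero =>
    intro q
    by_cases hq : q ∈ G <;> simp [mdpVal, hq]
  | succ j ih =>
    intro q
    have hsum : ∀ a, 0 ≤ ∑ q', mdpVal P G j q' * P q a q' ∧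
        (∑ q', mdpVal P G j q' * P q a q') ≤ 1 := by
      intro a
      constructor
      · exact Finset.sum_nonneg fun q' _ => mul_nonneg (ih q').1 (hP0 q a q')
      · calc (∑ q', mdpVal P G j q' * P q a q') ≤ ∑ q', P q a q' := by
              apply Finset.sum_le_sum
              intro q' _
              nlinarith [(ih q').1, (ih q').2, hP0 q a q']
          _ ≤ 1 := hP1 q a
    by_cases hq : q ∈ G
    · simp [mdpVal, Set.indicator_of_mem hq, Set.indicator_of_notMem (by simpa using hq : q ∉ Gᶜ)]
    · have hqc : q ∈ Gᶜ := hq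
      constructor
      · simp only [mdpVal, Set.indicator_of_notMem hq, Set.indicator_of_mem hqc, zero_add,
          one_mul]
        exact le_trans (hsum Classical.ofNonempty).1
          (Finset.le_sup' (fun a => ∑ q', mdpVal P G j q' * P q a q')
            (Finset.mem_univ _))
      · simp only [mdpVal, Set.indicator_of_notMem hq, Set.indicator_of_mem hqc, zero_add,
          one_mul]
        exact Finset.sup'_le _ _ fun a _ => (hsum a).2

lemma mdpVal_diff {Q A : Type*} [Fintype Q] [Fintype A] [Nonempty A]
    (P Phat : Q → A → Q → ℝ) (G : Set Q)
    (hP0 : ∀ q a q', 0 ≤ P q a q') (hP1 : ∀ q a, ∑ q', P q a q' ≤ 1)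
    (hPh0 : ∀ q a q', 0 ≤ Phat q a q') (hPh1 : ∀ q a, ∑ q', Phat q a q' ≤ 1)
    (δ : ℝ) (hδ : 0 ≤ δ)
    (hTV : ∀ q a, ∑ q', |P q a q' - Phat q a q'| ≤ δ) :
    ∀ j q, |mdpVal P G j q - mdpVal Phat G j q| ≤ (j : ℝ) * δ := by
  intro j
  induction j with
  | zero => intro q; simp [mdpVal]
  | succ j ih =>
    intro q
    by_cases hq : q ∈ G
    · simp [mdpVal, Set.indicator_of_mem hq,
        Set.indicator_of_notMem (by simpa using hq : q ∉ Gᶜ), mul_nonneg, hδ]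
      positivity
    · have hqc : q ∈ Gᶜ := hq
      simp only [mdpVal, Set.indicator_of_notMem hq, Set.indicator_of_mem hqc, zero_add,
        one_mul]
      -- bound difference of sums for each action
      have key : ∀ a, |(∑ q', mdpVal P G j q' * P q a q') -
          (∑ q', mdpVal Phat G j q' * Phat q a q')| ≤ (j : ℝ) * δ + δ := by
        intro a
        have h1 : (∑ q', mdpVal P G j q' * P q a q') -
            (∑ q', mdpVal Phat G j q' * Phat q a q') =
            (∑ q', (mdpVal P G j q' - mdpVal Phat G j q') * P q a q') +
            (∑ q', mdpVal Phat G j q' * (P q a q' - Phat q a q')) := by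
          rw [← Finset.sum_add_distrib, ← Finset.sum_sub_distrib]
          congr 1; ext q'; ring
        rw [h1]
        have hA : |∑ q', (mdpVal P G j q' - mdpVal Phat G j q') * P q a q'| ≤ (j : ℝ) * δ := by
          calc |∑ q', (mdpVal P G j q' - mdpVal Phat G j q') * P q a q'|
              ≤ ∑ q', |(mdpVal P G j q' - mdpVal Phat G j q') * P q a q'| :=
                Finset.abs_sum_le_sum_abs _ _
            _ ≤ ∑ q', ((j : ℝ) * δ) * P q a q' := by
                apply Finset.sum_le_sum
                intro q' _
                rw [abs_mul, abs_of_nonneg (hP0 q a q')]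
                exact mul_le_mul_of_nonneg_right (ih q') (hP0 q a q')
            _ = ((j : ℝ) * δ) * ∑ q', P q a q' := by rw [Finset.mul_sum]
            _ ≤ ((j : ℝ) * δ) * 1 :=
                mul_le_mul_of_nonneg_left (hP1 q a) (by positivity)
            _ = (j : ℝ) * δ := mul_one _
        have hB : |∑ q', mdpVal Phat G j q' * (P q a q' - Phat q a q')| ≤ δ := by
          calc |∑ q', mdpVal Phat G j q' * (P q a q' - Phat q a q')|
              ≤ ∑ q', |mdpVal Phat G j q' * (P q a q' - Phat q a q')| :=
                Finset.abs_sum_le_sum_abs _ _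
            _ ≤ ∑ q', |P q a q' - Phat q a q'| := by
                apply Finset.sum_le_sum
                intro q' _
                rw [abs_mul]
                have h0 := (mdpVal_mem Phat G hPh0 hPh1 j q').1
                have h1 := (mdpVal_mem Phat G hPh0 hPh1 j q').2
                calc |mdpVal Phat G j q'| * |P q a q' - Phat q a q'|
                    ≤ 1 * |P q a q' - Phat q a q'| := by
                      apply mul_le_mul_of_nonneg_right _ (abs_nonneg _)
                      rw [abs_of_nonneg h0]; exact h1
                  _ = _ := one_mul _
            _ ≤ δ := hTV q a
        calc |_ + _| ≤ _ + _ := abs_add_le _ _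
          _ ≤ (j : ℝ) * δ + δ := add_le_add hA hB
      -- sup' difference bound
      rw [abs_sub_le_iff]
      constructor
      · rw [sub_le_iff_le_add]
        apply Finset.sup'_le
        intro a _
        have := key a
        have h2 : (∑ q', mdpVal Phat G j q' * Phat q a q') ≤
            Finset.univ.sup' Finset.univ_nonempty
              (fun a => ∑ q', mdpVal Phat G j q' * Phat q a q') :=
          Finset.le_sup' (fun a => ∑ q', mdpVal Phat G j q' * Phat q a q') (Finset.mem_univ a)
        have := abs_le.1 (key a)
        push_cast
        linarith [this.2]
      · rw [sub_le_iff_le_add]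
        apply Finset.sup'_le
        intro a _
        have h2 : (∑ q', mdpVal P G j q' * P q a q') ≤
            Finset.univ.sup' Finset.univ_nonempty
              (fun a => ∑ q', mdpVal P G j q' * P q a q') :=
          Finset.le_sup' (fun a => ∑ q', mdpVal P G j q' * P q a q') (Finset.mem_univ a)
        have := abs_le.1 (key a)
        push_cast
        linarith [this.1]

theorem stmt11 {Q A : Type*} [Fintype Q] [Fintype A] [Nonempty A]
    (P Phat : Q → A → Q → ℝ) (G : Set Q) (H : ℕ)
    (hP0 : ∀ q a q', 0 ≤ P q a q') (hP1 : ∀ q a, ∑ q', P q a q' ≤ 1)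
    (hPh0 : ∀ q a q', 0 ≤ Phat q a q') (hPh1 : ∀ q a, ∑ q', Phat q a q' ≤ 1)
    (δ : ℝ) (hδ : 0 ≤ δ)
    (hTV : ∀ q a, ∑ q', |P q a q' - Phat q a q'| ≤ δ) :
    ∀ k ≤ H, ∀ q,
      |mdpVal P G (H - k) q - mdpVal Phat G (H - k) q| ≤ ((H - k : ℕ) : ℝ) * δ := by
  intro k _ q
  exact mdpVal_diff P Phat G hP0 hP1 hPh0 hPh1 δ hδ hTV (H - k) q
end

section
/- Let Q be a finite set of states, A a finite nonempty set of actions, G ⊆ Q a goal set, and H ∈ ℕ a horizon. Let P, P̂ : Q × A × Q → ℝ be substochastic transition functions (nonnegative with row sums at most 1), and suppose δ ≥ 0 satisfies Σ_{q′ ∈ Q} |P(q,a,q′) − P̂(q,a,q′)| ≤ δ for all q, a. Define V̂_H(q) = 1_G(q) and V̂_k(q) = 1_G(q) + 1_{Q∖G}(q) · max_{a ∈ A} Σ_{q′} V̂_{k+1}(q′) P̂(q,a,q′) for k = H−1,…,0. For each k, let σ_k : Q → A be a greedy selector for V̂, i.e., Σ_{q′} V̂_{k+1}(q′) P̂(q,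 σ_k(q), q′) = max_{a ∈ A} Σ_{q′} V̂_{k+1}(q′) P̂(q,a,q′) for all q. Define the policy value under the true kernel by W_H(q) = 1_G(q) and W_k(q) = 1_G(q) + 1_{Q∖G}(q) · Σ_{q′} W_{k+1}(q′) P(q, σ_k(q), q′). Then for every k ∈ {0,…,H} and every q ∈ Q: |W_k(q) − V̂_k(q)| ≤ (H − k)·δ. -/
/-- Value of the time-dependent policy `σ` under kernel `P` for horizon `H`:
`polVal P G σ H j q` is `W_k q` where `j = H - k` is the number of remaining steps,
so the action used at `q` with `j + 1` steps remaining is `σ (H - (j+1)) q`. -/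
noncomputable def polVal {Q A : Type*} [Fintype Q]
    (P : Q → A → Q → ℝ) (G : Set Q) (σ : ℕ → Q → A) (H : ℕ) : ℕ → Q → ℝ
  | 0 => fun q => Set.indicator G (fun _ => (1 : ℝ)) q
  | j + 1 => fun q =>
      Set.indicator G (fun _ => (1 : ℝ)) q +
        Set.indicator Gᶜ (fun _ => (1 : ℝ)) q *
          ∑ q', polVal P G σ H j q' * P q (σ (H - (j + 1)) q) q'

lemma mdpVal_bounds {Q A : Type*} [Fintype Q] [Fintype A] [Nonempty A]
    (P : Q → A → Q → ℝ) (G : Set Q)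
    (h0 : ∀ q a q', 0 ≤ P q a q') (h1 : ∀ q a, ∑ q', P q a q' ≤ 1) :
    ∀ j q, 0 ≤ mdpVal P G j q ∧ mdpVal P G j q ≤ 1 := by
  intro j
  induction j with
  | zero =>
    intro q
    by_cases hq : q ∈ G <;> simp [mdpVal, hq]
  | succ j ih =>
    intro q
    by_cases hq : q ∈ G
    · simp [mdpVal, hq]
    · have hsum : ∀ a : A, 0 ≤ ∑ q', mdpVal P G j q' * P q a q' ∧
          ∑ q', mdpVal P G j q' * P q a q' ≤ 1 := by
        intro a
        constructor
        · exact Finset.sum_nonneg fun q' _ => mul_nonneg (ih q').1 (h0 q a q')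
        · calc ∑ q', mdpVal P G j q' * P q a q' ≤ ∑ q', P q a q' := by
                apply Finset.sum_le_sum
                intro q' _
                nlinarith [(ih q').1, (ih q').2, h0 q a q']
            _ ≤ 1 := h1 q a
      simp only [mdpVal, Set.indicator_of_notMem hq,
        Set.indicator_of_mem (Set.mem_compl hq), zero_add, one_mul]
      constructor
      · obtain ⟨a⟩ := ‹Nonempty A›
        exact le_trans (hsum a).1 (Finset.le_sup' (fun a => ∑ q', mdpVal P G j q' * P q a q') (Finset.mem_univ a))
      · exact Finset.sup'_le _ _ fun a _ => (hsum a).2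

theorem stmt12 {Q A : Type*} [Fintype Q] [Fintype A] [Nonempty A]
    (P Phat : Q → A → Q → ℝ) (G : Set Q) (H : ℕ)
    (hP0 : ∀ q a q', 0 ≤ P q a q') (hP1 : ∀ q a, ∑ q', P q a q' ≤ 1)
    (hPh0 : ∀ q a q', 0 ≤ Phat q a q') (hPh1 : ∀ q a, ∑ q', Phat q a q' ≤ 1)
    (δ : ℝ) (hδ : 0 ≤ δ)
    (hTV : ∀ q a, ∑ q', |P q a q' - Phat q a q'| ≤ δ)
    (σ : ℕ → Q → A)
    (hgreedy : ∀ k < H, ∀ q,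
        ∑ q', mdpVal Phat G (H - (k + 1)) q' * Phat q (σ k q) q' =
          Finset.univ.sup' Finset.univ_nonempty
            (fun a => ∑ q', mdpVal Phat G (H - (k + 1)) q' * Phat q a q')) :
    ∀ k ≤ H, ∀ q,
      |polVal P G σ H (H - k) q - mdpVal Phat G (H - k) q| ≤ ((H - k : ℕ) : ℝ) * δ := by
  have key : ∀ j, j ≤ H → ∀ q, |polVal P G σ H j q - mdpVal Phat G j q| ≤ (j : ℝ) * δ := by
    intro j
    induction j with
    | zero => intro _ q; simp [polVal, mdpVal]
    | succ j ih =>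
      intro hj q
      have hjH : j ≤ H := le_of_lt (Nat.lt_of_succ_le hj)
      by_cases hq : q ∈ G
      · simp only [polVal, mdpVal, Set.indicator_of_mem hq,
          Set.indicator_of_notMem (by simpa using hq : q ∉ Gᶜ), zero_mul, add_zero,
          sub_self, abs_zero]
        positivity
      · have hk : H - (j + 1) < H := by omega
        have hsub : H - (H - (j + 1) + 1) = j := by omega
        have hg := hgreedy (H - (j + 1)) hk q
        rw [hsub] at hg
        set a := σ (H - (j + 1)) q with ha
        simp only [polVal, mdpVal, Set.indicator_of_notMem hq,
          Set.indicator_of_mem (Set.mem_compl hq), zero_add, one_mul, ← hg, ← ha]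
        have hsplit : ∑ q', polVal P G σ H j q' * P q a q' -
              ∑ q', mdpVal Phat G j q' * Phat q a q' =
            (∑ q', (polVal P G σ H j q' - mdpVal Phat G j q') * P q a q') +
              ∑ q', mdpVal Phat G j q' * (P q a q' - Phat q a q') := by
          rw [← Finset.sum_add_distrib, ← Finset.sum_sub_distrib]
          apply Finset.sum_congr rfl
          intro q' _; ring
        rw [hsplit]
        have hb1 : |∑ q', (polVal P G σ H j q' - mdpVal Phat G j q') * P q a q'| ≤
            (j : ℝ) * δ := by
          calc |∑ q', (polVal P G σ H j q' - mdpVal Phat G j q') * P q a q'|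
              ≤ ∑ q', |(polVal P G σ H j q' - mdpVal Phat G j q') * P q a q'| :=
                Finset.abs_sum_le_sum_abs _ _
            _ ≤ ∑ q', ((j : ℝ) * δ) * P q a q' := by
                apply Finset.sum_le_sum
                intro q' _
                rw [abs_mul, abs_of_nonneg (hP0 q a q')]
                exact mul_le_mul_of_nonneg_right (ih hjH q') (hP0 q a q')
            _ = ((j : ℝ) * δ) * ∑ q', P q a q' := by rw [Finset.mul_sum]
            _ ≤ ((j : ℝ) * δ) * 1 := by
                apply mul_le_mul_of_nonneg_left (hP1 q a); positivity
            _ = (j : ℝ) * δ := mul_one _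
        have hb2 : |∑ q', mdpVal Phat G j q' * (P q a q' - Phat q a q')| ≤ δ := by
          calc |∑ q', mdpVal Phat G j q' * (P q a q' - Phat q a q')|
              ≤ ∑ q', |mdpVal Phat G j q' * (P q a q' - Phat q a q')| :=
                Finset.abs_sum_le_sum_abs _ _
            _ ≤ ∑ q', |P q a q' - Phat q a q'| := by
                apply Finset.sum_le_sum
                intro q' _
                rw [abs_mul]
                have h := mdpVal_bounds Phat G hPh0 hPh1 j q'
                nlinarith [abs_nonneg (P q a q' - Phat q a q'),
                  abs_of_nonneg h.1]
            _ ≤ δ := hTV q a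
        calc |(∑ q', (polVal P G σ H j q' - mdpVal Phat G j q') * P q a q') +
              ∑ q', mdpVal Phat G j q' * (P q a q' - Phat q a q')|
            ≤ |∑ q', (polVal P G σ H j q' - mdpVal Phat G j q') * P q a q'| +
              |∑ q', mdpVal Phat G j q' * (P q a q' - Phat q a q')| := abs_add_le _ _
          _ ≤ (j : ℝ) * δ + δ := add_le_add hb1 hb2
          _ = ((j + 1 : ℕ) : ℝ) * δ := by push_cast; ring
  intro k hk q
  exact key (H - k) (Nat.sub_le H k) q
end
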